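/- Suppose A is a real symmetric N×N matrix with signature (N−1, 1) (N−1 positive and 1 negative eigenvalue), and suppose there exists a vector v ∈ ℝᴺ with det(A + v vᵀ) = 0. Then A + v vᵀ is positive semidefinite of rank N−1. -/

import Mathlib

open Matrix

-- rank of A + B at most rank A + rank B
lemma my_rank_add_le {m n : ℕ} (A B : Matrix (Fin m) (Fin n) ℝ) :
    (A + B).rank ≤ A.rank + B.rank := by
  rw [Matrix.rank, Matrix.rank, Matrix.rank, Matrix.mulVecLin_add]
  have h : LinearMap.range (A.mulVecLin + B.mulVecLin) ≤
      LinearMap.range A.mulVecLin ⊔ LinearMap.range B.mulVecLin := by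
    rintro x ⟨y, rfl⟩
    exact Submodule.add_mem_sup (LinearMap.mem_range_self _ y) (LinearMap.mem_range_self _ y)
  exact (Submodule.finrank_mono h).trans (Submodule.finrank_add_le_finrank_add_finrank _ _)

lemma my_rank_vecMulVec_le {n : ℕ} (u v : Fin n → ℝ) :
    (Matrix.vecMulVec u v).rank ≤ 1 := by
  rw [Matrix.vecMulVec_eq Unit]
  refine (Matrix.rank_mul_le_left _ _).trans ?_
  simpa using Matrix.rank_le_card_width (Matrix.replicateCol Unit u)

lemma my_conj_vecMulVec {n : ℕ} (B C : Matrix (Fin n) (Fin n) ℝ) (u v : Fin n → ℝ) :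
    B * Matrix.vecMulVec u v * C = Matrix.vecMulVec (B *ᵥ u) (Cᵀ *ᵥ v) := by
  rw [Matrix.vecMulVec_eq Unit, Matrix.vecMulVec_eq Unit]
  rw [show Matrix.replicateCol Unit (B *ᵥ u) = B * Matrix.replicateCol Unit u from by ext i j; simp [Matrix.mulVec, Matrix.mul_apply, dotProduct]]
  rw [show Matrix.replicateRow Unit (Cᵀ *ᵥ v) = Matrix.replicateRow Unit v * C from by ext i j; simp [Matrix.mulVec, Matrix.mul_apply, dotProduct, mul_comm]]
  simp only [Matrix.mul_assoc]

lemma my_dot_vecMulVec {n : ℕ} (w x : Fin n → ℝ) :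
    x ⬝ᵥ (Matrix.vecMulVec w w *ᵥ x) = (w ⬝ᵥ x)^2 := by
  simp only [dotProduct, Matrix.mulVec, Matrix.vecMulVec_apply, dotProduct, sq,
    Finset.sum_mul_sum]
  rw [Finset.sum_congr rfl]
  intro i _
  rw [Finset.mul_sum]
  exact Finset.sum_congr rfl fun j _ => by ring

lemma my_psd {N : ℕ} (hN : 0 < N) (w : Fin N → ℝ)
    (hw : w ⬝ᵥ (Matrix.diagonal (fun i : Fin N => if (i:ℕ)=0 then (-1:ℝ) else 1) *ᵥ w) = -1) :
    (Matrix.diagonal (fun i : Fin N => if (i:ℕ)=0 then (-1:ℝ) else 1)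
      + Matrix.vecMulVec w w).PosSemidef := by
  set d : Fin N → ℝ := fun i => if (i:ℕ)=0 then (-1:ℝ) else 1 with hd
  have key : ∀ x : Fin N → ℝ, x ⬝ᵥ (Matrix.diagonal d *ᵥ x) = ∑ i, d i * (x i)^2 := by
    intro x
    simp only [dotProduct, Matrix.mulVec_diagonal]
    exact Finset.sum_congr rfl fun i _ => by ring
  set i0 : Fin N := ⟨0, hN⟩ with hi0
  have hdsplit : ∀ f : Fin N → ℝ, ∑ i, d i * f i = - f i0 + ∑ i ∈ Finset.univ.erase i0, f i := by
    intro f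
    rw [← Finset.add_sum_erase _ _ (Finset.mem_univ i0)]
    have : d i0 = -1 := by simp [hd, hi0]
    rw [this]
    congr 1
    · ring
    · refine Finset.sum_congr rfl fun i hi => ?_
      have hne : i ≠ i0 := Finset.ne_of_mem_erase hi
      have : d i = 1 := by
        simp only [hd]
        rw [if_neg]
        intro h
        exact hne (Fin.ext h)
      rw [this, one_mul]
  have hwsplit : (w i0)^2 = 1 + ∑ i ∈ Finset.univ.erase i0, (w i)^2 := by
    rw [key w, hdsplit (fun i => (w i)^2)] at hw
    linarith
  rw [Matrix.posSemidef_iff_dotProduct_mulVec]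
  constructor
  · refine (Matrix.isHermitian_diagonal _).add ?_
    ext i j
    simp [Matrix.vecMulVec_apply, Matrix.conjTranspose_apply, mul_comm]
  · intro x
    rw [star_trivial, Matrix.add_mulVec, dotProduct_add, my_dot_vecMulVec, key, hdsplit]
    have hdot : w ⬝ᵥ x = w i0 * x i0 + ∑ i ∈ Finset.univ.erase i0, w i * x i := by
      rw [dotProduct, ← Finset.add_sum_erase _ _ (Finset.mem_univ i0)]
    rw [hdot]
    set a := x i0
    set b := w i0
    set t := ∑ i ∈ Finset.univ.erase i0, (x i)^2 with ht'
    set u := ∑ i ∈ Finset.univ.erase i0, w i * x i with hu'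
    set s := ∑ i ∈ Finset.univ.erase i0, (w i)^2 with hs'
    have ht : 0 ≤ t := Finset.sum_nonneg fun i _ => sq_nonneg _
    have hs : 0 ≤ s := Finset.sum_nonneg fun i _ => sq_nonneg _
    have hCS : u^2 ≤ s * t := by
      rw [hu', hs', ht']
      exact Finset.sum_mul_sq_le_sq_mul_sq _ _ _
    rcases eq_or_lt_of_le hs with hs0 | hs0
    · have hu0 : u = 0 := by nlinarith [sq_nonneg u]
      rw [hu0, add_zero, mul_pow, hwsplit, ← hs0]
      nlinarith
    · have key2 : s * (-a^2 + t + (b*a+u)^2) = (s*a + b*u)^2 + (s*t - u^2) := by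
        linear_combination (s*a^2 - u^2) * hwsplit
      nlinarith [key2, sq_nonneg (s*a + b*u), hCS, hs0]

lemma my_dot_conj {n : ℕ} (M Q : Matrix (Fin n) (Fin n) ℝ) (v : Fin n → ℝ) :
    v ⬝ᵥ ((Q * M * Qᵀ) *ᵥ v) = (Qᵀ *ᵥ v) ⬝ᵥ (M *ᵥ (Qᵀ *ᵥ v)) := by
  rw [← Matrix.mulVec_mulVec, ← Matrix.mulVec_mulVec, Matrix.dotProduct_mulVec,
    ← Matrix.mulVec_transpose]

/-- If `A` is a real symmetric `N×N` matrix of signature `(N−1, 1)` (witnessed by a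
congruence to the diagonal matrix with one `−1` and `N−1` ones), `vᵀ A⁻¹ v = −1`
(equivalently `det(A + v vᵀ) = 0`), then `A + v vᵀ` is positive semidefinite of rank `N−1`. -/
theorem stmt_16 (N : ℕ) (A : Matrix (Fin N) (Fin N) ℝ) (hsymm : A.IsSymm)
    (P : Matrix (Fin N) (Fin N) ℝ) (hP : IsUnit P.det)
    (hsig : Pᵀ * A * P =
      Matrix.diagonal (fun i : Fin N => if (i : ℕ) = 0 then (-1 : ℝ) else 1))
    (v : Fin N → ℝ)
    (hdet : (A + Matrix.vecMulVec v v).det = 0)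
    (hquad : v ⬝ᵥ (A⁻¹ *ᵥ v) = -1) :
    (A + Matrix.vecMulVec v v).PosSemidef ∧ (A + Matrix.vecMulVec v v).rank = N - 1 := by
  rcases Nat.eq_zero_or_pos N with rfl | hN
  · simp [dotProduct] at hquad
  set d : Fin N → ℝ := fun i => if (i:ℕ)=0 then (-1:ℝ) else 1 with hd
  set D := Matrix.diagonal d with hD
  have hPt : IsUnit Pᵀ.det := Matrix.isUnit_det_transpose P hP
  have hDD : D * D = 1 := by
    rw [hD, Matrix.diagonal_mul_diagonal]
    rw [show (fun i => d i * d i) = fun _ => (1:ℝ) from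
      funext fun i => by by_cases h : (i:ℕ)=0 <;> simp [hd, h]]
    exact Matrix.diagonal_one
  have hdetD : D.det ≠ 0 := by
    rw [hD, Matrix.det_diagonal]
    refine Finset.prod_ne_zero_iff.mpr fun i _ => ?_
    by_cases h : (i:ℕ)=0 <;> simp [hd, h]
  have hAdet : IsUnit A.det := by
    have h := congrArg Matrix.det hsig
    rw [Matrix.det_mul, Matrix.det_mul, Matrix.det_transpose] at h
    rw [isUnit_iff_ne_zero]
    intro h0
    rw [h0] at h
    simp at h
    exact hdetD h.symm
  have hA : A = Pᵀ⁻¹ * D * P⁻¹ := by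
    calc A = Pᵀ⁻¹ * Pᵀ * A * (P * P⁻¹) := by
            rw [Matrix.nonsing_inv_mul _ hPt, Matrix.mul_nonsing_inv _ hP,
              Matrix.one_mul, Matrix.mul_one]
      _ = Pᵀ⁻¹ * (Pᵀ * A * P) * P⁻¹ := by simp only [Matrix.mul_assoc]
      _ = Pᵀ⁻¹ * D * P⁻¹ := by rw [hsig]
  have hAinv : A⁻¹ = P * D * Pᵀ := by
    apply Matrix.inv_eq_right_inv
    rw [hA]
    simp only [Matrix.mul_assoc]
    rw [Matrix.nonsing_inv_mul_cancel_left _ _ hP, ← Matrix.mul_assoc D D, hDD,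
      Matrix.one_mul, Matrix.nonsing_inv_mul _ hPt]
  set w : Fin N → ℝ := Pᵀ *ᵥ v with hwdef
  have hw : w ⬝ᵥ (D *ᵥ w) = -1 := by
    have hcalc : v ⬝ᵥ ((P*D*Pᵀ) *ᵥ v) = w ⬝ᵥ (D *ᵥ w) := by
      rw [my_dot_conj, hwdef]
    rw [hAinv, hcalc] at hquad
    exact hquad
  have hconj : Pᵀ * (A + Matrix.vecMulVec v v) * P = D + Matrix.vecMulVec w w := by
    rw [Matrix.mul_add, Matrix.add_mul, hsig, my_conj_vecMulVec, ← hwdef]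
  have hMpsd : (D + Matrix.vecMulVec w w).PosSemidef := my_psd hN w hw
  have hBeq : A + Matrix.vecMulVec v v = (P⁻¹)ᴴ * (D + Matrix.vecMulVec w w) * P⁻¹ := by
    rw [← hconj, show (P⁻¹)ᴴ = Pᵀ⁻¹ from by
      rw [show (P⁻¹)ᴴ = (P⁻¹)ᵀ from by ext i j; simp [Matrix.conjTranspose_apply],
        Matrix.transpose_nonsing_inv]]
    rw [Matrix.mul_assoc Pᵀ⁻¹, Matrix.mul_nonsing_inv_cancel_right _ _ hP,
      Matrix.nonsing_inv_mul_cancel_left _ _ hPt]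
  have hpsd : (A + Matrix.vecMulVec v v).PosSemidef := by
    rw [hBeq]
    exact hMpsd.conjTranspose_mul_mul_same P⁻¹
  refine ⟨hpsd, ?_⟩
  set B := A + Matrix.vecMulVec v v with hB
  -- kernel vector
  have hu0 : A⁻¹ *ᵥ v ≠ 0 := by
    intro h
    rw [h, dotProduct_zero] at hquad
    norm_num at hquad
  have hBu : B *ᵥ (A⁻¹ *ᵥ v) = 0 := by
    rw [hB, Matrix.add_mulVec, Matrix.mulVec_mulVec, Matrix.mul_nonsing_inv _ hAdet,
      Matrix.one_mulVec]
    have hvv : Matrix.vecMulVec v v *ᵥ (A⁻¹ *ᵥ v) = (v ⬝ᵥ (A⁻¹ *ᵥ v)) • v := by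
      ext i
      simp [Matrix.vecMulVec_apply, Matrix.mulVec, dotProduct, Finset.mul_sum,
        Finset.sum_mul, mul_comm, mul_assoc, mul_left_comm]
    rw [hvv, hquad]
    ext i; simp
  have hrankle : B.rank ≤ N - 1 := by
    have h1 : B.rank + Module.finrank ℝ (LinearMap.ker B.mulVecLin) = N := by
      rw [Matrix.rank, LinearMap.finrank_range_add_finrank_ker]
      simp [Module.finrank_pi]
    have h2 : 0 < Module.finrank ℝ (LinearMap.ker B.mulVecLin) := by
      rw [Module.finrank_pos_iff]
      refine nontrivial_of_ne ⟨A⁻¹ *ᵥ v, ?_⟩ 0 ?_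
      · rw [LinearMap.mem_ker, Matrix.mulVecLin_apply, hBu]
      · intro hc
        exact hu0 (congrArg Subtype.val hc)
    omega
  have hrankge : N ≤ B.rank + 1 := by
    have hA_rank : A.rank = N := by
      rw [Matrix.rank_of_isUnit A ((Matrix.isUnit_iff_isUnit_det A).mpr hAdet)]
      simp
    have hAeq : A = B + Matrix.vecMulVec (-v) v := by
      rw [hB]; ext i j; simp [Matrix.vecMulVec_apply]; try ring
    calc N = A.rank := hA_rank.symm
      _ = (B + Matrix.vecMulVec (-v) v).rank := by rw [← hAeq]
      _ ≤ B.rank + (Matrix.vecMulVec (-v) v).rank := my_rank_add_le _ _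
      _ ≤ B.rank + 1 := by
          have := my_rank_vecMulVec_le (-v) v
          omega
  omega
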